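/- For all 0 < ε ≤ 1, all x with 1 − |cos(x)| > 0, all s ∈ [0,2π] with |sin((s−α)/2)| > ε and |sin((s+α)/2)| > ε, and all u ∈ [0,2π], the function g_x^α satisfies |g_x^α(s,u)| ≤ 1/(ε² (1 − |cos(x)|)). -/
import Mathlib


open Real

noncomputable def gfun (α x s u : ℝ) : ℝ :=
  Real.sin x * Real.sin ((s - α) / 2) * Real.sin ((s + α) / 2) /
    (Real.sin ((u - x) / 2) ^ 2 * Real.sin ((s + α) / 2) ^ 2
      + Real.sin ((u + x) / 2) ^ 2 * Real.sin ((s - α) / 2) ^ 2)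

theorem gfun_bound (α : ℝ) (hα : α ∈ Set.Ico 0 (2 * π)) (ε : ℝ) (hε0 : 0 < ε) (hε1 : ε ≤ 1)
    (x : ℝ) (hx : 0 < 1 - |Real.cos x|)
    (s : ℝ) (hs : s ∈ Set.Icc (0 : ℝ) (2 * π))
    (hs1 : ε < |Real.sin ((s - α) / 2)|) (hs2 : ε < |Real.sin ((s + α) / 2)|)
    (u : ℝ) (hu : u ∈ Set.Icc (0 : ℝ) (2 * π)) :
    |gfun α x s u| ≤ 1 / (ε ^ 2 * (1 - |Real.cos x|)) := by
  set a := Real.sin ((s - α) / 2)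
  set b := Real.sin ((s + α) / 2)
  set A := Real.sin ((u - x) / 2) ^ 2
  set B := Real.sin ((u + x) / 2) ^ 2
  have hA : 0 ≤ A := sq_nonneg _
  have hB : 0 ≤ B := sq_nonneg _
  have ha2 : ε ^ 2 < a ^ 2 := by
    have := sq_lt_sq' (by linarith [abs_nonneg a, hs1] : -|a| < ε) hs1
    simpa [sq_abs] using this
  have hb2 : ε ^ 2 < b ^ 2 := by
    have := sq_lt_sq' (by linarith [abs_nonneg b, hs2] : -|b| < ε) hs2
    simpa [sq_abs] using this
  have hsum : A + B = 1 - Real.cos u * Real.cos x := by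
    have h1 : Real.sin ((u - x) / 2) ^ 2 = (1 - Real.cos (u - x)) / 2 := by
      rw [Real.sin_sq_eq_half_sub, show 2 * ((u - x) / 2) = u - x by ring]; ring
    have h2 : Real.sin ((u + x) / 2) ^ 2 = (1 - Real.cos (u + x)) / 2 := by
      rw [Real.sin_sq_eq_half_sub, show 2 * ((u + x) / 2) = u + x by ring]; ring
    rw [show A = _ from h1, show B = _ from h2, Real.cos_sub, Real.cos_add]
    ring
  have hcos : Real.cos u * Real.cos x ≤ |Real.cos x| := by
    calc Real.cos u * Real.cos x ≤ |Real.cos u * Real.cos x| := le_abs_self _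
    _ = |Real.cos u| * |Real.cos x| := abs_mul _ _
    _ ≤ 1 * |Real.cos x| := by
        exact mul_le_mul_of_nonneg_right (Real.abs_cos_le_one u) (abs_nonneg _)
    _ = |Real.cos x| := one_mul _
  have hD : ε ^ 2 * (1 - |Real.cos x|) ≤ A * b ^ 2 + B * a ^ 2 := by
    have h1 : ε ^ 2 * (A + B) ≤ A * b ^ 2 + B * a ^ 2 := by nlinarith
    have h2 : 1 - |Real.cos x| ≤ A + B := by rw [hsum]; linarith
    nlinarith [sq_nonneg ε]
  have hDpos : 0 < ε ^ 2 * (1 - |Real.cos x|) := by positivity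
  have hnum : |Real.sin x * a * b| ≤ 1 := by
    rw [abs_mul, abs_mul]
    calc |Real.sin x| * |a| * |b| ≤ 1 * 1 * 1 := by
          gcongr
          · exact Real.abs_sin_le_one x
          · exact Real.abs_sin_le_one _
          · exact Real.abs_sin_le_one _
      _ = 1 := by ring
  rw [gfun, abs_div]
  rw [abs_of_pos (lt_of_lt_of_le hDpos hD)]
  exact div_le_div₀ zero_le_one hnum hDpos hD
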